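/- Every plactic monoid of finite rank n is right reversible: for all u, v ∈ P_n there exist X, Y ∈ P_n with Xu = Yv. -/

import Mathlib

/-- The Knuth relations on words over the alphabet `Fin n`:
`xzy = zxy` for `x ≤ y < z` and `yxz = yzx` for `x < y ≤ z`. -/
def KnuthRel (n : ℕ) : FreeMonoid (Fin n) → FreeMonoid (Fin n) → Prop := fun a b =>
  (∃ x y z : Fin n, x ≤ y ∧ y < z ∧
      a = FreeMonoid.of x * FreeMonoid.of z * FreeMonoid.of y ∧
      b = FreeMonoid.of z * FreeMonoid.of x * FreeMonoid.of y) ∨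
  (∃ x y z : Fin n, x < y ∧ y ≤ z ∧
      a = FreeMonoid.of y * FreeMonoid.of x * FreeMonoid.of z ∧
      b = FreeMonoid.of y * FreeMonoid.of z * FreeMonoid.of x)

/-- The plactic monoid of rank `n`, presented by generators `Fin n` and the
Knuth relations. -/
def Plactic (n : ℕ) := (conGen (KnuthRel n)).Quotient

instance (n : ℕ) : Monoid (Plactic n) :=
  inferInstanceAs (Monoid (conGen (KnuthRel n)).Quotient)

/-- The canonical projection from the free monoid to the plactic monoid. -/
def Plactic.mk (n : ℕ) : FreeMonoid (Fin n) →* Plactic n := Con.mk' _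

namespace PlacticRev

variable {n : ℕ}

/-- Image of a word (as a list) in the plactic monoid. -/
def M (w : List (Fin n)) : Plactic n := Plactic.mk n (FreeMonoid.ofList w)

lemma M_append (u v : List (Fin n)) : M (u ++ v) = M u * M v := by
  simp [M, FreeMonoid.ofList_append, map_mul]

lemma M_nil : (M ([] : List (Fin n))) = 1 := rfl

/-- The second Knuth relation, in list form: `y x z ≡ y z x` for `x < y ≤ z`. -/
lemma knuth2 {x y z : Fin n} (h1 : x < y) (h2 : y ≤ z) :
    (M [y, x, z] : Plactic n) = M [y, z, x] := by
  have h : (conGen (KnuthRel n)) (FreeMonoid.ofList [y, x, z]) (FreeMonoid.ofList [y, z, x]) :=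
    ConGen.Rel.of _ _ (Or.inr ⟨x, y, z, h1, h2, rfl, rfl⟩)
  exact (Con.eq _).mpr h

lemma M_congr (p q : List (Fin n)) {u v : List (Fin n)} (h : M u = M v) :
    M (p ++ u ++ q) = M (p ++ v ++ q) := by
  simp only [M_append, h]

/-- Core lemma α: for a strictly decreasing word `C` whose entries are all `< b`,
`b C b ≡ b b C`. Only uses the second Knuth relation. -/
lemma alpha (b : Fin n) (C : List (Fin n)) (hlt : ∀ c ∈ C, c < b)
    (hp : C.Pairwise (· > ·)) :
    M ([b] ++ C ++ [b]) = M ([b] ++ [b] ++ C) := by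
  induction C using List.reverseRecOn with
  | nil => simp
  | append_singleton C' d IH =>
    have hdb : d < b := hlt d (by simp)
    rcases C'.eq_nil_or_concat' with rfl | ⟨C'', c, rfl⟩
    · show M [b, d, b] = M [b, b, d]
      exact knuth2 hdb le_rfl
    · have hcd : c > d := by
        rw [List.pairwise_append] at hp
        exact hp.2.2 c (by simp) d (by simp)
      have hcb : c ≤ b := le_of_lt (hlt c (by simp))
      have hC' : (C'' ++ [c]).Pairwise (· > ·) := (List.pairwise_append.mp hp).1
      have hltC' : ∀ x ∈ C'' ++ [c], x < b := fun x hx =>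
        hlt x (by simp only [List.mem_append] at hx ⊢; tauto)
      calc M ([b] ++ (C'' ++ [c] ++ [d]) ++ [b])
          = M (([b] ++ C'') ++ [c, d, b] ++ []) := by
            apply congrArg M; simp
        _ = M (([b] ++ C'') ++ [c, b, d] ++ []) :=
            M_congr _ _ (knuth2 hcd hcb)
        _ = M ([] ++ ([b] ++ (C'' ++ [c]) ++ [b]) ++ [d]) := by
            apply congrArg M; simp
        _ = M ([] ++ ([b] ++ [b] ++ (C'' ++ [c])) ++ [d]) :=
            M_congr _ _ (IH hltC' hC')
        _ = M ([b] ++ [b] ++ (C'' ++ [c] ++ [d])) := by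
            apply congrArg M; simp

/-- A strictly decreasing word commutes (in the plactic monoid) with any of its
prefixes: `B C B ≡ B B C` whenever `B ++ C` is strictly decreasing. -/
lemma comm_core (B C : List (Fin n)) (h : (B ++ C).Pairwise (· > ·)) :
    M (B ++ C ++ B) = M (B ++ B ++ C) := by
  induction B with
  | nil => simp
  | cons b B' IH =>
    have h' : (b :: (B' ++ C)).Pairwise (· > ·) := by simpa using h
    rw [List.pairwise_cons] at h'
    have hlt : ∀ x ∈ B' ++ C, x < b := fun x hx => h'.1 x hx
    have hp : (B' ++ C).Pairwise (· > ·) := h'.2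
    have hltB' : ∀ x ∈ B', x < b := fun x hx => hlt x (by simp [hx])
    have hpB' : B'.Pairwise (· > ·) := (List.pairwise_append.mp hp).1
    calc M ((b :: B') ++ C ++ (b :: B'))
        = M ([] ++ ([b] ++ (B' ++ C) ++ [b]) ++ B') := by
          apply congrArg M; simp
      _ = M ([] ++ ([b] ++ [b] ++ (B' ++ C)) ++ B') :=
          M_congr _ _ (alpha b (B' ++ C) hlt hp)
      _ = M ([b, b] ++ (B' ++ C ++ B') ++ []) := by
          apply congrArg M; simp
      _ = M ([b, b] ++ (B' ++ B' ++ C) ++ []) := M_congr _ _ (IH hp)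
      _ = M ([] ++ ([b] ++ [b] ++ B') ++ (B' ++ C)) := by
          apply congrArg M; simp
      _ = M ([] ++ ([b] ++ B' ++ [b]) ++ (B' ++ C)) :=
          (M_congr _ _ (alpha b B' hltB' hpB')).symm
      _ = M ((b :: B') ++ (b :: B') ++ C) := by
          apply congrArg M; simp

section Columns

/-- The "suffix column" word `(n-1, n-2, ..., n-1-k)`. -/
def runk (hn : 0 < n) : ℕ → List (Fin n)
  | 0 => [⟨n - 1, by omega⟩]
  | k + 1 => runk hn k ++ [⟨n - 1 - (k + 1), by omega⟩]

lemma runk_mem (hn : 0 < n) : ∀ (k : ℕ) (x : Fin n), x ∈ runk hn k → n - 1 - k ≤ (x : ℕ) := by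
  intro k
  induction k with
  | zero =>
    intro x hx
    have hx' : x = (⟨n - 1, by omega⟩ : Fin n) := by simpa [runk] using hx
    subst hx'
    simp
  | succ k IH =>
    intro x hx
    simp only [runk, List.mem_append, List.mem_singleton] at hx
    rcases hx with hx | rfl
    · have := IH x hx; omega
    · simp

lemma runk_pairwise (hn : 0 < n) {k : ℕ} (hk : k < n) : (runk hn k).Pairwise (· > ·) := by
  induction k with
  | zero => simp [runk]
  | succ k IH =>
    have hk' : k < n := by omega
    simp only [runk]
    rw [List.pairwise_append]
    refine ⟨IH hk', by simp, ?_⟩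
    intro x hx y hy
    simp only [List.mem_singleton] at hy
    subst hy
    have := runk_mem hn k x hx
    show (⟨n - 1 - (k + 1), by omega⟩ : Fin n) < x
    rw [Fin.lt_def]
    simp only
    omega

lemma runk_prefix (hn : 0 < n) {j k : ℕ} (hjk : j ≤ k) : ∃ D, runk hn k = runk hn j ++ D := by
  induction k with
  | zero =>
    have : j = 0 := by omega
    subst this; exact ⟨[], by simp⟩
  | succ k IH =>
    rcases Nat.eq_or_lt_of_le hjk with rfl | h
    · exact ⟨[], by simp⟩
    · obtain ⟨D, hD⟩ := IH (by omega)
      exact ⟨D ++ [⟨n - 1 - (k + 1), by omega⟩], by simp [runk, hD]⟩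

lemma runs_commute (hn : 0 < n) {j k : ℕ} (hj : j < n) (hk : k < n) :
    Commute (M (runk hn j)) (M (runk hn k)) := by
  have key : ∀ {a b : ℕ}, a ≤ b → b < n →
      M (runk hn b) * M (runk hn a) = M (runk hn a) * M (runk hn b) := by
    intro a b hab hb
    obtain ⟨D, hD⟩ := runk_prefix hn hab
    have hp : (runk hn a ++ D).Pairwise (· > ·) := by
      rw [← hD]; exact runk_pairwise hn hb
    have := comm_core (runk hn a) D hp
    calc M (runk hn b) * M (runk hn a)
        = M (runk hn b ++ runk hn a) := (M_append _ _).symm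
      _ = M (runk hn a ++ D ++ runk hn a) := by rw [hD]
      _ = M (runk hn a ++ runk hn a ++ D) := this
      _ = M (runk hn a) * M (runk hn a ++ D) := by
          simp only [M_append, mul_assoc]
      _ = M (runk hn a) * M (runk hn b) := by rw [← hD]
  rcases le_total j k with h | h
  · exact (key h hk).symm
  · exact key h hj

/-- The product `σ_k = c_0 c_1 ⋯ c_k` of the suffix columns (longest first). -/
def sigk (hn : 0 < n) : ℕ → Plactic n
  | 0 => M (runk hn 0)
  | k + 1 => M (runk hn (k + 1)) * sigk hn k

/-- `Q z` : `z` commutes with every suffix column. -/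
def Q (hn : 0 < n) (z : Plactic n) : Prop :=
  ∀ k, k < n → Commute z (M (runk hn k))

lemma Q_one (hn : 0 < n) : Q hn (1 : Plactic n) := fun _ _ => Commute.one_left _

lemma Q_mul (hn : 0 < n) {x y : Plactic n} (hx : Q hn x) (hy : Q hn y) : Q hn (x * y) :=
  fun k hk => Commute.mul_left (hx k hk) (hy k hk)

lemma Q_runk (hn : 0 < n) {j : ℕ} (hj : j < n) : Q hn (M (runk hn j)) :=
  fun k hk => runs_commute hn hj hk

lemma commute_sigk (hn : 0 < n) {z : Plactic n} (hz : Q hn z) :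
    ∀ k, k < n → Commute z (sigk hn k) := by
  intro k
  induction k with
  | zero => intro hk; exact hz 0 hk
  | succ k IH =>
    intro hk
    exact Commute.mul_right (hz (k + 1) hk) (IH (by omega))

lemma Q_sigk (hn : 0 < n) {k : ℕ} (hk : k < n) : Q hn (sigk hn k) := by
  induction k with
  | zero => exact Q_runk hn hk
  | succ k IH =>
    exact Q_mul hn (Q_runk hn hk) (IH (by omega))

lemma sigk_extract (hn : 0 < n) {k j : ℕ} (hk : k < n) (hj : j ≤ k) :
    ∃ p q, Q hn p ∧ Q hn q ∧ sigk hn k = p * (M (runk hn j) * q) := by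
  induction k with
  | zero =>
    have : j = 0 := by omega
    subst this
    exact ⟨1, 1, Q_one hn, Q_one hn, by simp [sigk]⟩
  | succ k IH =>
    rcases Nat.eq_or_lt_of_le hj with rfl | h
    · exact ⟨1, sigk hn k, Q_one hn, Q_sigk hn (by omega), by simp [sigk]⟩
    · obtain ⟨p, q, hp, hq, hpq⟩ := IH (by omega) (by omega)
      refine ⟨M (runk hn (k + 1)) * p, q, Q_mul hn (Q_runk hn hk) hp, hq, ?_⟩
      simp [sigk, hpq, mul_assoc]

/-- The universal element. -/
def sigma (hn : 0 < n) : Plactic n := sigk hn (n - 1)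

lemma Q_sigma (hn : 0 < n) : Q hn (sigma hn) := Q_sigk hn (by omega)

/-- Pop lemma: for every letter `a` there is `z` commuting with all columns
with `z ⬝ a = σ`. -/
lemma pop (hn : 0 < n) (a : Fin n) :
    ∃ z : Plactic n, Q hn z ∧ z * Plactic.mk n (FreeMonoid.of a) = sigma hn := by
  have ha : (a : ℕ) < n := a.isLt
  have hjn : n - 1 - (a : ℕ) ≤ n - 1 := by omega
  set j : ℕ := n - 1 - (a : ℕ) with hj
  obtain ⟨p, q, hp, hq, hpq⟩ := sigk_extract hn (k := n - 1) (by omega) hjn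
  have hcomm : M (runk hn j) * q = q * M (runk hn j) :=
    (hq j (by omega)).symm
  -- rewrite σ = p * q * M (runk hn j)
  have hσ : sigma hn = p * q * M (runk hn j) := by
    rw [sigma, hpq, hcomm, ← mul_assoc]
  rcases Nat.eq_zero_or_pos j with hj0 | hjpos
  · -- a is the top letter; runk 0 = [a]
    have haval : (a : ℕ) = n - 1 := by omega
    have : runk hn j = [a] := by
      rw [hj0]; simp only [runk]
      congr 1
      exact Fin.ext (by simp [haval])
    refine ⟨p * q, Q_mul hn hp hq, ?_⟩
    rw [hσ, this]
    rfl
  · obtain ⟨j', hj'⟩ : ∃ j', j = j' + 1 := ⟨j - 1, by omega⟩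
    have hlast : (⟨n - 1 - (j' + 1), by omega⟩ : Fin n) = a := by
      apply Fin.ext
      simp only []
      omega
    have hrun : runk hn j = runk hn j' ++ [a] := by
      rw [hj']; simp [runk, hlast]
    refine ⟨p * q * M (runk hn j'), Q_mul hn (Q_mul hn hp hq) (Q_runk hn (by omega)), ?_⟩
    rw [hσ, hrun, M_append]
    have : M [a] = Plactic.mk n (FreeMonoid.of a) := rfl
    rw [← this, mul_assoc, mul_assoc]

lemma main_lemma (hn : 0 < n) (w : List (Fin n)) :
    ∃ (x : Plactic n) (k : ℕ), x * M w = (sigma hn) ^ k := by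
  induction w using List.reverseRecOn with
  | nil => exact ⟨1, 0, by simp [M_nil]⟩
  | append_singleton w a IH =>
    obtain ⟨x, k, hx⟩ := IH
    obtain ⟨z, hQz, hz⟩ := pop hn a
    have hcs : Commute z (sigma hn) := commute_sigk hn hQz (n - 1) (by omega)
    refine ⟨z * x, k + 1, ?_⟩
    have : M (w ++ [a]) = M w * Plactic.mk n (FreeMonoid.of a) := by
      rw [M_append]; rfl
    rw [this, ← mul_assoc, mul_assoc z x (M w), hx]
    calc z * (sigma hn) ^ k * Plactic.mk n (FreeMonoid.of a)
        = (sigma hn) ^ k * z * Plactic.mk n (FreeMonoid.of a) := by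
          rw [(hcs.pow_right k).eq]
      _ = (sigma hn) ^ k * (z * Plactic.mk n (FreeMonoid.of a)) := by
          rw [mul_assoc]
      _ = (sigma hn) ^ k * sigma hn := by rw [hz]
      _ = (sigma hn) ^ (k + 1) := by rw [pow_succ]

end Columns

end PlacticRev

/-- The plactic monoid of any finite rank is right reversible: any two
principal left ideals intersect. -/
theorem plactic_right_reversible (n : ℕ) (u v : Plactic n) :
    ∃ X Y : Plactic n, X * u = Y * v := by
  obtain ⟨fu, rfl⟩ : ∃ f, Plactic.mk n f = u := Con.mk'_surjective u
  obtain ⟨fv, rfl⟩ : ∃ f, Plactic.mk n f = v := Con.mk'_surjective v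
  rcases Nat.eq_zero_or_pos n with rfl | hn
  · -- rank 0 : all words are empty
    have hu : fu = 1 := by
      induction fu using FreeMonoid.recOn with
      | one => rfl
      | of_mul x xs _ => exact x.elim0
    have hv : fv = 1 := by
      induction fv using FreeMonoid.recOn with
      | one => rfl
      | of_mul x xs _ => exact x.elim0
    subst hu; subst hv
    exact ⟨1, 1, rfl⟩
  · have hu : Plactic.mk n fu = PlacticRev.M (FreeMonoid.toList fu) := rfl
    have hv : Plactic.mk n fv = PlacticRev.M (FreeMonoid.toList fv) := rfl
    obtain ⟨x, k, hx⟩ := PlacticRev.main_lemma hn (FreeMonoid.toList fu)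
    obtain ⟨y, m, hy⟩ := PlacticRev.main_lemma hn (FreeMonoid.toList fv)
    refine ⟨(PlacticRev.sigma hn) ^ m * x, (PlacticRev.sigma hn) ^ k * y, ?_⟩
    rw [hu, hv, mul_assoc, hx, mul_assoc, hy, ← pow_add, ← pow_add, Nat.add_comm]
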